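/- Correctness of simple LL(1) parsing with derivatives: for every LL(1) syntax s : Syntax A (i.e. ¬HasConflict s), every token sequence ts and every value v : A, parse s ts = some v if and only if Matches s ts v. -/
import Mathlib


set_option autoImplicit false

/-- Context-free syntaxes (value-aware context-free expressions). -/
inductive Syn (Token Kind : Type) (Var : Type → Type) : Type → Type 1 where
  | elem (k : Kind) : Syn Token Kind Var Token
  | fail {A : Type} : Syn Token Kind Var A
  | eps {A : Type} (v : A) : Syn Token Kind Var A
  | disj {A : Type} (s₁ s₂ : Syn Token Kind Var A) : Syn Token Kind Var A
  | seqn {A B : Type} (s₁ : Syn Token Kind Var A) (s₂ : Syn Token Kind Var B) :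
      Syn Token Kind Var (A × B)
  | map {A B : Type} (f : A → B) (s : Syn Token Kind Var A) : Syn Token Kind Var B
  | var {A : Type} (x : Var A) : Syn Token Kind Var A

section

variable {Token Kind : Type} {Var : Type → Type}
variable (kd : Token → Kind) (env : ∀ A : Type, Var A → Syn Token Kind Var A)

/-- Semantics of syntaxes. -/
inductive Matches : ∀ {A : Type}, Syn Token Kind Var A → List Token → A → Prop where
  | elem {k : Kind} {t : Token} (h : kd t = k) : Matches (Syn.elem k) [t] t
  | eps {A : Type} (v : A) : Matches (Syn.eps v) [] v
  | disjL {A : Type} {s₁ s₂ : Syn Token Kind Var A} {ts : List Token} {v : A} :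
      Matches s₁ ts v → Matches (Syn.disj s₁ s₂) ts v
  | disjR {A : Type} {s₁ s₂ : Syn Token Kind Var A} {ts : List Token} {v : A} :
      Matches s₂ ts v → Matches (Syn.disj s₁ s₂) ts v
  | seqn {A B : Type} {s₁ : Syn Token Kind Var A} {s₂ : Syn Token Kind Var B}
      {ts₁ ts₂ : List Token} {v₁ : A} {v₂ : B} :
      Matches s₁ ts₁ v₁ → Matches s₂ ts₂ v₂ →
      Matches (Syn.seqn s₁ s₂) (ts₁ ++ ts₂) (v₁, v₂)
  | map {A B : Type} (f : A → B) {s : Syn Token Kind Var A} {ts : List Token} {v : A} :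
      Matches s ts v → Matches (Syn.map f s) ts (f v)
  | var {A : Type} (x : Var A) {ts : List Token} {v : A} :
      Matches (env A x) ts v → Matches (Syn.var x) ts v

/-- Productivity. -/
inductive Productive : ∀ {A : Type}, Syn Token Kind Var A → Prop where
  | eps {A : Type} (v : A) : Productive (Syn.eps v)
  | elem (k : Kind) : Productive (Syn.elem k)
  | disjL {A : Type} {s₁ s₂ : Syn Token Kind Var A} :
      Productive s₁ → Productive (Syn.disj s₁ s₂)
  | disjR {A : Type} {s₁ s₂ : Syn Token Kind Var A} :
      Productive s₂ → Productive (Syn.disj s₁ s₂)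
  | seqn {A B : Type} {s₁ : Syn Token Kind Var A} {s₂ : Syn Token Kind Var B} :
      Productive s₁ → Productive s₂ → Productive (Syn.seqn s₁ s₂)
  | map {A B : Type} (f : A → B) {s : Syn Token Kind Var A} :
      Productive s → Productive (Syn.map f s)
  | var {A : Type} (x : Var A) : Productive (env A x) → Productive (Syn.var x)

/-- Nullability, with associated value. -/
inductive Nullable : ∀ {A : Type}, Syn Token Kind Var A → A → Prop where
  | eps {A : Type} (v : A) : Nullable (Syn.eps v) v
  | disjL {A : Type} {s₁ s₂ : Syn Token Kind Var A} {v : A} :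
      Nullable s₁ v → Nullable (Syn.disj s₁ s₂) v
  | disjR {A : Type} {s₁ s₂ : Syn Token Kind Var A} {v : A} :
      Nullable s₂ v → Nullable (Syn.disj s₁ s₂) v
  | seqn {A B : Type} {s₁ : Syn Token Kind Var A} {s₂ : Syn Token Kind Var B} {v₁ : A} {v₂ : B} :
      Nullable s₁ v₁ → Nullable s₂ v₂ → Nullable (Syn.seqn s₁ s₂) (v₁, v₂)
  | map {A B : Type} (f : A → B) {s : Syn Token Kind Var A} {v : A} :
      Nullable s v → Nullable (Syn.map f s) (f v)
  | var {A : Type} (x : Var A) {v : A} : Nullable (env A x) v → Nullable (Syn.var x) v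

/-- First sets: `InFirst env k s` means `k ∈ First s`. -/
inductive InFirst : ∀ {A : Type}, Kind → Syn Token Kind Var A → Prop where
  | elem (k : Kind) : InFirst k (Syn.elem k)
  | disjL {A : Type} {k : Kind} {s₁ s₂ : Syn Token Kind Var A} :
      InFirst k s₁ → InFirst k (Syn.disj s₁ s₂)
  | disjR {A : Type} {k : Kind} {s₁ s₂ : Syn Token Kind Var A} :
      InFirst k s₂ → InFirst k (Syn.disj s₁ s₂)
  | seqnL {A B : Type} {k : Kind} {s₁ : Syn Token Kind Var A} {s₂ : Syn Token Kind Var B} :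
      InFirst k s₁ → Productive env s₂ → InFirst k (Syn.seqn s₁ s₂)
  | seqnR {A B : Type} {k : Kind} {s₁ : Syn Token Kind Var A} {s₂ : Syn Token Kind Var B}
      {v : A} : Nullable env s₁ v → InFirst k s₂ → InFirst k (Syn.seqn s₁ s₂)
  | map {A B : Type} {k : Kind} (f : A → B) {s : Syn Token Kind Var A} :
      InFirst k s → InFirst k (Syn.map f s)
  | var {A : Type} {k : Kind} (x : Var A) : InFirst k (env A x) → InFirst k (Syn.var x)

/-- Should-not-follow sets: `InSNF env k s` means `k ∈ ShouldNotFollow s`. -/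
inductive InSNF : ∀ {A : Type}, Kind → Syn Token Kind Var A → Prop where
  | disjL {A : Type} {k : Kind} {s₁ s₂ : Syn Token Kind Var A} :
      InSNF k s₁ → InSNF k (Syn.disj s₁ s₂)
  | disjR {A : Type} {k : Kind} {s₁ s₂ : Syn Token Kind Var A} :
      InSNF k s₂ → InSNF k (Syn.disj s₁ s₂)
  | disjFN {A : Type} {k : Kind} {s₁ s₂ : Syn Token Kind Var A} {v : A} :
      InFirst env k s₁ → Nullable env s₂ v → InSNF k (Syn.disj s₁ s₂)
  | disjNF {A : Type} {k : Kind} {s₁ s₂ : Syn Token Kind Var A} {v : A} :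
      Nullable env s₁ v → InFirst env k s₂ → InSNF k (Syn.disj s₁ s₂)
  | seqnL {A B : Type} {k : Kind} {s₁ : Syn Token Kind Var A} {s₂ : Syn Token Kind Var B}
      {v : B} : InSNF k s₁ → Nullable env s₂ v → InSNF k (Syn.seqn s₁ s₂)
  | seqnR {A B : Type} {k : Kind} {s₁ : Syn Token Kind Var A} {s₂ : Syn Token Kind Var B} :
      Productive env s₁ → InSNF k s₂ → InSNF k (Syn.seqn s₁ s₂)
  | map {A B : Type} {k : Kind} (f : A → B) {s : Syn Token Kind Var A} :
      InSNF k s → InSNF k (Syn.map f s)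
  | var {A : Type} {k : Kind} (x : Var A) : InSNF k (env A x) → InSNF k (Syn.var x)

/-- LL(1) conflicts. A syntax `s` is LL(1) iff `¬ HasConflict env s`. -/
inductive HasConflict : ∀ {A : Type}, Syn Token Kind Var A → Prop where
  | disjNN {A : Type} {s₁ s₂ : Syn Token Kind Var A} {v₁ v₂ : A} :
      Nullable env s₁ v₁ → Nullable env s₂ v₂ → HasConflict (Syn.disj s₁ s₂)
  | disjFF {A : Type} {s₁ s₂ : Syn Token Kind Var A} {k : Kind} :
      InFirst env k s₁ → InFirst env k s₂ → HasConflict (Syn.disj s₁ s₂)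
  | disjL {A : Type} {s₁ s₂ : Syn Token Kind Var A} :
      HasConflict s₁ → HasConflict (Syn.disj s₁ s₂)
  | disjR {A : Type} {s₁ s₂ : Syn Token Kind Var A} :
      HasConflict s₂ → HasConflict (Syn.disj s₁ s₂)
  | seqnSF {A B : Type} {s₁ : Syn Token Kind Var A} {s₂ : Syn Token Kind Var B} {k : Kind} :
      InSNF env k s₁ → InFirst env k s₂ → HasConflict (Syn.seqn s₁ s₂)
  | seqnL {A B : Type} {s₁ : Syn Token Kind Var A} {s₂ : Syn Token Kind Var B} :
      HasConflict s₁ → HasConflict (Syn.seqn s₁ s₂)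
  | seqnR {A B : Type} {s₁ : Syn Token Kind Var A} {s₂ : Syn Token Kind Var B} :
      HasConflict s₂ → HasConflict (Syn.seqn s₁ s₂)
  | map {A B : Type} (f : A → B) {s : Syn Token Kind Var A} :
      HasConflict s → HasConflict (Syn.map f s)
  | var {A : Type} (x : Var A) : HasConflict (env A x) → HasConflict (Syn.var x)

end

/-- Layers of a context, with above type `A` and below type `B`. -/
inductive Layer (Token Kind : Type) (Var : Type → Type) : Type → Type → Type 1 where
  | apply {A B : Type} (f : A → B) : Layer Token Kind Var A B
  | prepend {A C : Type} (v : C) : Layer Token Kind Var A (C × A)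
  | followBy {A C : Type} (s : Syn Token Kind Var C) : Layer Token Kind Var A (A × C)

/-- Type-aligned contexts (stacks of layers). -/
inductive Ctx (Token Kind : Type) (Var : Type → Type) : Type → Type → Type 1 where
  | nil {A : Type} : Ctx Token Kind Var A A
  | cons {A B C : Type} (l : Layer Token Kind Var A B) (c : Ctx Token Kind Var B C) :
      Ctx Token Kind Var A C

section

variable {Token Kind : Type} {Var : Type → Type}

def Ctx.isNil : ∀ {A B : Type}, Ctx Token Kind Var A B → Bool
  | _, _, Ctx.nil => true
  | _, _, Ctx.cons _ _ => false

/-- Unfocusing a focused syntax. -/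
def unfocus : ∀ {A B : Type}, Syn Token Kind Var A → Ctx Token Kind Var A B →
    Syn Token Kind Var B
  | _, _, s, Ctx.nil => s
  | _, _, s, Ctx.cons (Layer.apply f) c => unfocus (Syn.map f s) c
  | _, _, s, Ctx.cons (Layer.prepend v) c => unfocus (Syn.seqn (Syn.eps v) s) c
  | _, _, s, Ctx.cons (Layer.followBy s') c => unfocus (Syn.seqn s s') c

/-- Focused syntaxes with below type `B`. -/
def Focused (Token Kind : Type) (Var : Type → Type) (B : Type) : Type 1 :=
  (A : Type) × Syn Token Kind Var A × Ctx Token Kind Var A B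

def unfocusF {B : Type} (fs : Focused Token Kind Var B) : Syn Token Kind Var B :=
  unfocus fs.2.1 fs.2.2

def focusF {A : Type} (s : Syn Token Kind Var A) : Focused Token Kind Var A :=
  ⟨A, s, Ctx.nil⟩

/-- Plugging a value into a context. -/
def plug : ∀ {A B : Type}, A → Ctx Token Kind Var A B → Focused Token Kind Var B
  | A, _, v, Ctx.nil => ⟨A, Syn.eps v, Ctx.nil⟩
  | _, _, v, Ctx.cons (Layer.apply f) c => plug (f v) c
  | _, _, v, Ctx.cons (Layer.prepend v') c => plug (v', v) c
  | _, _, v, Ctx.cons (Layer.followBy s) c => ⟨_, s, Ctx.cons (Layer.prepend v) c⟩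

end

section

variable {Token Kind : Type} {Var : Type → Type}
variable (kd : Token → Kind) (env : ∀ A : Type, Var A → Syn Token Kind Var A)

/-- Inversion predicate for `Matches`. -/
def MInv : ∀ {A : Type}, Syn Token Kind Var A → List Token → A → Prop
  | _, .elem k, ts, v => ts = [v] ∧ kd v = k
  | _, .fail, _, _ => False
  | _, .eps u, ts, v => ts = [] ∧ v = u
  | _, .disj s₁ s₂, ts, v => Matches kd env s₁ ts v ∨ Matches kd env s₂ ts v
  | _, .seqn s₁ s₂, ts, v =>
      ∃ ts₁ ts₂, ts = ts₁ ++ ts₂ ∧ Matches kd env s₁ ts₁ v.1 ∧ Matches kd env s₂ ts₂ v.2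
  | _, .map f s, ts, v => ∃ u, v = f u ∧ Matches kd env s ts u
  | _, .var x, ts, v => Matches kd env (env _ x) ts v

theorem matches_inv {A : Type} {s : Syn Token Kind Var A} {ts : List Token} {v : A}
    (h : Matches kd env s ts v) : MInv kd env s ts v := by
  cases h with
  | elem hk => exact ⟨rfl, hk⟩
  | eps v => exact ⟨rfl, rfl⟩
  | disjL m => exact Or.inl m
  | disjR m => exact Or.inr m
  | seqn m₁ m₂ => exact ⟨_, _, rfl, m₁, m₂⟩
  | map f m => exact ⟨_, rfl, m⟩
  | var x m => exact m

/-- Inversion predicate for `InFirst`. -/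
def FInv (k : Kind) : ∀ {A : Type}, Syn Token Kind Var A → Prop
  | _, .elem k' => k = k'
  | _, .fail => False
  | _, .eps _ => False
  | _, .disj s₁ s₂ => InFirst env k s₁ ∨ InFirst env k s₂
  | _, .seqn s₁ s₂ =>
      (InFirst env k s₁ ∧ Productive env s₂) ∨ ((∃ v, Nullable env s₁ v) ∧ InFirst env k s₂)
  | _, .map _ s => InFirst env k s
  | _, .var x => InFirst env k (env _ x)

theorem infirst_inv {A : Type} {k : Kind} {s : Syn Token Kind Var A}
    (h : InFirst env k s) : FInv env k s := by
  cases h with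
  | elem k => exact rfl
  | disjL h => exact Or.inl h
  | disjR h => exact Or.inr h
  | seqnL h hp => exact Or.inl ⟨h, hp⟩
  | seqnR hn h => exact Or.inr ⟨⟨_, hn⟩, h⟩
  | map f h => exact h
  | var x h => exact h

/-- Inversion predicate for `InSNF`. -/
def SInv (k : Kind) : ∀ {A : Type}, Syn Token Kind Var A → Prop
  | _, .elem _ => False
  | _, .fail => False
  | _, .eps _ => False
  | _, .disj s₁ s₂ =>
      InSNF env k s₁ ∨ InSNF env k s₂ ∨ (InFirst env k s₁ ∧ ∃ v, Nullable env s₂ v) ∨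
        ((∃ v, Nullable env s₁ v) ∧ InFirst env k s₂)
  | _, .seqn s₁ s₂ =>
      (InSNF env k s₁ ∧ ∃ v, Nullable env s₂ v) ∨ (Productive env s₁ ∧ InSNF env k s₂)
  | _, .map _ s => InSNF env k s
  | _, .var x => InSNF env k (env _ x)

theorem insnf_inv {A : Type} {k : Kind} {s : Syn Token Kind Var A}
    (h : InSNF env k s) : SInv env k s := by
  cases h with
  | disjL h => exact Or.inl h
  | disjR h => exact Or.inr (Or.inl h)
  | disjFN h hn => exact Or.inr (Or.inr (Or.inl ⟨h, _, hn⟩))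
  | disjNF hn h => exact Or.inr (Or.inr (Or.inr ⟨⟨_, hn⟩, h⟩))
  | seqnL h hn => exact Or.inl ⟨h, _, hn⟩
  | seqnR hp h => exact Or.inr ⟨hp, h⟩
  | map f h => exact h
  | var x h => exact h

/-- Inversion predicate for `HasConflict`. -/
def CInv : ∀ {A : Type}, Syn Token Kind Var A → Prop
  | _, .elem _ => False
  | _, .fail => False
  | _, .eps _ => False
  | _, .disj s₁ s₂ =>
      (∃ v₁ v₂, Nullable env s₁ v₁ ∧ Nullable env s₂ v₂) ∨
        (∃ k, InFirst env k s₁ ∧ InFirst env k s₂) ∨ HasConflict env s₁ ∨ HasConflict env s₂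
  | _, .seqn s₁ s₂ =>
      (∃ k, InSNF env k s₁ ∧ InFirst env k s₂) ∨ HasConflict env s₁ ∨ HasConflict env s₂
  | _, .map _ s => HasConflict env s
  | _, .var x => HasConflict env (env _ x)

theorem hasconflict_inv {A : Type} {s : Syn Token Kind Var A}
    (h : HasConflict env s) : CInv env s := by
  cases h with
  | disjNN hn₁ hn₂ => exact Or.inl ⟨_, _, hn₁, hn₂⟩
  | disjFF h₁ h₂ => exact Or.inr (Or.inl ⟨_, h₁, h₂⟩)
  | disjL h => exact Or.inr (Or.inr (Or.inl h))
  | disjR h => exact Or.inr (Or.inr (Or.inr h))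
  | seqnSF h₁ h₂ => exact Or.inl ⟨_, h₁, h₂⟩
  | seqnL h => exact Or.inr (Or.inl h)
  | seqnR h => exact Or.inr (Or.inr h)
  | map f h => exact h
  | var x h => exact h

theorem matches_nil_of_nullable {A : Type} {s : Syn Token Kind Var A} {v : A}
    (h : Nullable env s v) : Matches kd env s [] v := by
  induction h with
  | eps v => exact .eps v
  | disjL _ ih => exact .disjL ih
  | disjR _ ih => exact .disjR ih
  | seqn _ _ ih₁ ih₂ => exact Matches.seqn ih₁ ih₂
  | map f _ ih => exact .map f ih
  | var x _ ih => exact .var x ih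

theorem nullable_of_matches_nil {A : Type} {s : Syn Token Kind Var A} {ls : List Token} {v : A}
    (h : Matches kd env s ls v) : ls = [] → Nullable env s v := by
  induction h with
  | elem hk => intro h'; simp at h'
  | eps v => intro _; exact .eps v
  | disjL _ ih => intro h'; exact .disjL (ih h')
  | disjR _ ih => intro h'; exact .disjR (ih h')
  | seqn _ _ ih₁ ih₂ =>
      intro h'
      rcases List.append_eq_nil_iff.mp h' with ⟨h1, h2⟩
      exact .seqn (ih₁ h1) (ih₂ h2)
  | map f _ ih => intro h'; exact .map f (ih h')
  | var x _ ih => intro h'; exact .var x (ih h')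

theorem productive_of_nullable {A : Type} {s : Syn Token Kind Var A} {v : A}
    (h : Nullable env s v) : Productive env s := by
  induction h with
  | eps v => exact .eps v
  | disjL _ ih => exact .disjL ih
  | disjR _ ih => exact .disjR ih
  | seqn _ _ ih₁ ih₂ => exact .seqn ih₁ ih₂
  | map f _ ih => exact .map f ih
  | var x _ ih => exact .var x ih

theorem productive_of_matches {A : Type} {s : Syn Token Kind Var A} {ls : List Token} {v : A}
    (h : Matches kd env s ls v) : Productive env s := by
  induction h with
  | elem hk => exact .elem _
  | eps v => exact .eps v
  | disjL _ ih => exact .disjL ih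
  | disjR _ ih => exact .disjR ih
  | seqn _ _ ih₁ ih₂ => exact .seqn ih₁ ih₂
  | map f _ ih => exact .map f ih
  | var x _ ih => exact .var x ih

theorem productive_of_infirst {A : Type} {s : Syn Token Kind Var A} {k : Kind}
    (h : InFirst env k s) : Productive env s := by
  induction h with
  | elem k => exact .elem k
  | disjL _ ih => exact .disjL ih
  | disjR _ ih => exact .disjR ih
  | seqnL _ hp ih => exact .seqn ih hp
  | seqnR hn _ ih => exact .seqn (productive_of_nullable env hn) ih
  | map f _ ih => exact .map f ih
  | var x _ ih => exact .var x ih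

theorem infirst_of_matches {A : Type} {s : Syn Token Kind Var A} {ls : List Token} {v : A}
    (h : Matches kd env s ls v) : ∀ (t : Token) (ts : List Token), ls = t :: ts →
    InFirst env (kd t) s := by
  induction h with
  | elem hk =>
      intro t ts he
      injection he with h1 h2
      subst h1
      rw [hk]
      exact .elem _
  | eps v => intro t ts he; simp at he
  | disjL _ ih => intro t ts he; exact .disjL (ih t ts he)
  | disjR _ ih => intro t ts he; exact .disjR (ih t ts he)
  | seqn m₁ m₂ ih₁ ih₂ =>
      rename_i A' B' s₁ s₂ ts₁ ts₂ v₁ v₂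
      intro t ts he
      cases ts₁ with
      | nil =>
          exact .seqnR (nullable_of_matches_nil kd env m₁ rfl) (ih₂ t ts he)
      | cons a l =>
          injection he with h1 h2
          subst h1; subst h2
          exact .seqnL (ih₁ a l rfl) (productive_of_matches kd env m₂)
  | map f _ ih => intro t ts he; exact .map f (ih t ts he)
  | var x _ ih => intro t ts he; exact .var x (ih t ts he)

theorem insnf_of_nullable_infirst {A : Type} {s : Syn Token Kind Var A} {v : A} {k : Kind}
    (hn : Nullable env s v) : ¬ HasConflict env s → InFirst env k s → InSNF env k s := by
  induction hn with
  | eps v => intro _ hf; exact (infirst_inv env hf).elim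
  | disjL h ih =>
      intro hc hf
      rcases infirst_inv env hf with h₁ | h₂
      · exact .disjL (ih (fun c => hc (.disjL c)) h₁)
      · exact .disjNF h h₂
  | disjR h ih =>
      intro hc hf
      rcases infirst_inv env hf with h₁ | h₂
      · exact .disjFN h₁ h
      · exact .disjR (ih (fun c => hc (.disjR c)) h₂)
  | seqn hn₁ hn₂ ih₁ ih₂ =>
      intro hc hf
      rcases infirst_inv env hf with ⟨h₁, hp⟩ | ⟨_, h₂⟩
      · exact .seqnL (ih₁ (fun c => hc (.seqnL c)) h₁) hn₂
      · exact .seqnR (productive_of_nullable env hn₁) (ih₂ (fun c => hc (.seqnR c)) h₂)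
  | map f h ih =>
      intro hc hf
      exact .map f (ih (fun c => hc (.map f c)) (infirst_inv env hf))
  | var x h ih =>
      intro hc hf
      exact .var x (ih (fun c => hc (.var x c)) (infirst_inv env hf))

theorem simple_ll1_parse_correct
    (nullOpt : ∀ {A : Type}, Syn Token Kind Var A → Option A)
    (hnull : ∀ {A : Type} (s : Syn Token Kind Var A), ¬ HasConflict env s →
      ∀ v : A, nullOpt s = some v ↔ Nullable env s v)
    (delta : ∀ {A : Type}, Token → Syn Token Kind Var A → Syn Token Kind Var A)
    (hdelta_elem : ∀ (t : Token) (k : Kind),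
      ¬ HasConflict env (Syn.elem k : Syn Token Kind Var Token) →
      InFirst env (kd t) (Syn.elem k : Syn Token Kind Var Token) →
      delta t (Syn.elem k) = Syn.eps t)
    (hdelta_disj₁ : ∀ {A : Type} (t : Token) (s₁ s₂ : Syn Token Kind Var A),
      ¬ HasConflict env (Syn.disj s₁ s₂) → InFirst env (kd t) (Syn.disj s₁ s₂) →
      InFirst env (kd t) s₁ → delta t (Syn.disj s₁ s₂) = delta t s₁)
    (hdelta_disj₂ : ∀ {A : Type} (t : Token) (s₁ s₂ : Syn Token Kind Var A),
      ¬ HasConflict env (Syn.disj s₁ s₂) → InFirst env (kd t) (Syn.disj s₁ s₂) →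
      ¬ InFirst env (kd t) s₁ → delta t (Syn.disj s₁ s₂) = delta t s₂)
    (hdelta_seqn₁ : ∀ {A B : Type} (t : Token) (s₁ : Syn Token Kind Var A)
      (s₂ : Syn Token Kind Var B) (v : A),
      ¬ HasConflict env (Syn.seqn s₁ s₂) → InFirst env (kd t) (Syn.seqn s₁ s₂) →
      nullOpt s₁ = some v → InFirst env (kd t) s₂ →
      delta t (Syn.seqn s₁ s₂) = Syn.seqn (Syn.eps v) (delta t s₂))
    (hdelta_seqn₂ : ∀ {A B : Type} (t : Token) (s₁ : Syn Token Kind Var A)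
      (s₂ : Syn Token Kind Var B),
      ¬ HasConflict env (Syn.seqn s₁ s₂) → InFirst env (kd t) (Syn.seqn s₁ s₂) →
      (∀ v : A, nullOpt s₁ = some v → ¬ InFirst env (kd t) s₂) →
      delta t (Syn.seqn s₁ s₂) = Syn.seqn (delta t s₁) s₂)
    (hdelta_map : ∀ {A B : Type} (t : Token) (f : A → B) (s : Syn Token Kind Var A),
      ¬ HasConflict env (Syn.map f s) → InFirst env (kd t) (Syn.map f s) →
      delta t (Syn.map f s) = Syn.map f (delta t s))
    (hdelta_var : ∀ {A : Type} (t : Token) (x : Var A),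
      ¬ HasConflict env (Syn.var x : Syn Token Kind Var A) →
      InFirst env (kd t) (Syn.var x : Syn Token Kind Var A) →
      delta t (Syn.var x) = delta t (env A x))
    (parse : ∀ {A : Type}, Syn Token Kind Var A → List Token → Option A)
    (hparse_nil : ∀ {A : Type} (s : Syn Token Kind Var A), parse s [] = nullOpt s)
    (hparse_cons₁ : ∀ {A : Type} (s : Syn Token Kind Var A) (t : Token) (ts : List Token),
      InFirst env (kd t) s → parse s (t :: ts) = parse (delta t s) ts)
    (hparse_cons₂ : ∀ {A : Type} (s : Syn Token Kind Var A) (t : Token) (ts : List Token),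
      ¬ InFirst env (kd t) s → parse s (t :: ts) = none)
    {A : Type} (s : Syn Token Kind Var A) (hs : ¬ HasConflict env s)
    (ts : List Token) (v : A) :
    parse s ts = some v ↔ Matches kd env s ts v := by  -- delta preserves LL(1) and shrinks should-not-follow sets
  have L_dg : ∀ {B : Type} {s : Syn Token Kind Var B} {k : Kind}, InFirst env k s →
      ∀ t : Token, kd t = k → ¬ HasConflict env s →
        ¬ HasConflict env (delta t s) ∧
          ∀ k', InSNF env k' (delta t s) → InSNF env k' s := by
    intro B s k h
    induction h with
    | elem k =>
        intro t hk hc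
        rw [hdelta_elem t k hc (by rw [hk]; exact .elem k)]
        refine ⟨fun c => (hasconflict_inv env c).elim, fun k' h' => (insnf_inv env h').elim⟩
    | disjL h₁ ih =>
        rename_i A' k' s₁ s₂
        intro t hk hc
        have hf1 : InFirst env (kd t) s₁ := by rw [hk]; exact h₁
        rw [hdelta_disj₁ t _ _ hc (.disjL hf1) hf1]
        rcases ih t hk (fun c => hc (.disjL c)) with ⟨a, b⟩
        exact ⟨a, fun k' h' => .disjL (b k' h')⟩
    | disjR h₂ ih =>
        rename_i A' k' s₁ s₂
        intro t hk hc
        have hf2 : InFirst env (kd t) s₂ := by rw [hk]; exact h₂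
        have hn1 : ¬ InFirst env (kd t) s₁ := fun hf1 => hc (.disjFF hf1 hf2)
        rw [hdelta_disj₂ t _ _ hc (.disjR hf2) hn1]
        rcases ih t hk (fun c => hc (.disjR c)) with ⟨a, b⟩
        exact ⟨a, fun k' h' => .disjR (b k' h')⟩
    | seqnL h₁ hp ih =>
        rename_i A' B' k' s₁ s₂
        intro t hk hc
        have hf1 : InFirst env (kd t) s₁ := by rw [hk]; exact h₁
        have hcond : ∀ w, nullOpt s₁ = some w → ¬ InFirst env (kd t) s₂ := by
          intro w hw hf2
          have hn : Nullable env s₁ w := (hnull s₁ (fun c => hc (.seqnL c)) w).mp hw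
          exact hc (.seqnSF (insnf_of_nullable_infirst env hn (fun c => hc (.seqnL c)) hf1) hf2)
        rw [hdelta_seqn₂ t s₁ s₂ hc (.seqnL hf1 hp) hcond]
        rcases ih t hk (fun c => hc (.seqnL c)) with ⟨a, b⟩
        refine ⟨fun c => ?_, fun k'' h' => ?_⟩
        · rcases hasconflict_inv env c with ⟨k₀, h₁', h₂'⟩ | c | c
          · exact hc (.seqnSF (b _ h₁') h₂')
          · exact a c
          · exact hc (.seqnR c)
        · rcases insnf_inv env h' with ⟨h₁', w, hn'⟩ | ⟨hp', h₂'⟩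
          · exact .seqnL (b _ h₁') hn'
          · exact .seqnR (productive_of_infirst env hf1) h₂'
    | seqnR hn h₂ ih =>
        rename_i A' B' k' s₁ s₂ v₀
        intro t hk hc
        have hf2 : InFirst env (kd t) s₂ := by rw [hk]; exact h₂
        have hw : nullOpt s₁ = some v₀ := (hnull s₁ (fun c => hc (.seqnL c)) v₀).mpr hn
        rw [hdelta_seqn₁ t s₁ s₂ v₀ hc (.seqnR hn hf2) hw hf2]
        rcases ih t hk (fun c => hc (.seqnR c)) with ⟨a, b⟩
        refine ⟨fun c => ?_, fun k'' h' => ?_⟩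
        · rcases hasconflict_inv env c with ⟨k₀, h₁', _⟩ | c | c
          · exact (insnf_inv env h₁').elim
          · exact (hasconflict_inv env c).elim
          · exact a c
        · rcases insnf_inv env h' with ⟨h₁', _⟩ | ⟨_, h₂'⟩
          · exact (insnf_inv env h₁').elim
          · exact .seqnR (productive_of_nullable env hn) (b _ h₂')
    | map f h ih =>
        intro t hk hc
        rw [hdelta_map t f _ hc (.map f (by rw [hk]; exact h))]
        rcases ih t hk (fun c => hc (.map f c)) with ⟨a, b⟩
        refine ⟨fun c => a (hasconflict_inv env c), fun k' h' => .map f (b k' (insnf_inv env h'))⟩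
    | var x h ih =>
        intro t hk hc
        rw [hdelta_var t x hc (.var x (by rw [hk]; exact h))]
        rcases ih t hk (fun c => hc (.var x c)) with ⟨a, b⟩
        exact ⟨a, fun k' h' => .var x (b k' h')⟩
  -- soundness of the derivative
  have L_fwd : ∀ {B : Type} {s : Syn Token Kind Var B} {k : Kind}, InFirst env k s →
      ∀ t : Token, kd t = k → ¬ HasConflict env s →
        ∀ (ts : List Token) (w : B),
          Matches kd env (delta t s) ts w → Matches kd env s (t :: ts) w := by
    intro B s k h
    induction h with
    | elem k =>
        intro t hk hc ts w hm
        rw [hdelta_elem t k hc (by rw [hk]; exact .elem k)] at hm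
        obtain ⟨rfl, rfl⟩ := matches_inv kd env hm
        exact .elem hk
    | disjL h₁ ih =>
        rename_i A' k' s₁ s₂
        intro t hk hc ts w hm
        have hf1 : InFirst env (kd t) s₁ := by rw [hk]; exact h₁
        rw [hdelta_disj₁ t _ _ hc (.disjL hf1) hf1] at hm
        exact .disjL (ih t hk (fun c => hc (.disjL c)) ts w hm)
    | disjR h₂ ih =>
        rename_i A' k' s₁ s₂
        intro t hk hc ts w hm
        have hf2 : InFirst env (kd t) s₂ := by rw [hk]; exact h₂
        have hn1 : ¬ InFirst env (kd t) s₁ := fun hf1 => hc (.disjFF hf1 hf2)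
        rw [hdelta_disj₂ t _ _ hc (.disjR hf2) hn1] at hm
        exact .disjR (ih t hk (fun c => hc (.disjR c)) ts w hm)
    | seqnL h₁ hp ih =>
        rename_i A' B' k' s₁ s₂
        intro t hk hc ts w hm
        obtain ⟨w₁, w₂⟩ := w
        have hf1 : InFirst env (kd t) s₁ := by rw [hk]; exact h₁
        have hcond : ∀ u, nullOpt s₁ = some u → ¬ InFirst env (kd t) s₂ := by
          intro u hu hf2
          have hn : Nullable env s₁ u := (hnull s₁ (fun c => hc (.seqnL c)) u).mp hu
          exact hc (.seqnSF (insnf_of_nullable_infirst env hn (fun c => hc (.seqnL c)) hf1) hf2)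
        rw [hdelta_seqn₂ t s₁ s₂ hc (.seqnL hf1 hp) hcond] at hm
        obtain ⟨ts₁, ts₂, rfl, m₁, m₂⟩ := matches_inv kd env hm
        exact Matches.seqn (ih t hk (fun c => hc (.seqnL c)) ts₁ w₁ m₁) m₂
    | seqnR hn h₂ ih =>
        rename_i A' B' k' s₁ s₂ v₀
        intro t hk hc ts w hm
        obtain ⟨w₁, w₂⟩ := w
        have hf2 : InFirst env (kd t) s₂ := by rw [hk]; exact h₂
        have hw : nullOpt s₁ = some v₀ := (hnull s₁ (fun c => hc (.seqnL c)) v₀).mpr hn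
        rw [hdelta_seqn₁ t s₁ s₂ v₀ hc (.seqnR hn hf2) hw hf2] at hm
        obtain ⟨ts₁, ts₂, rfl, m₁, m₂⟩ := matches_inv kd env hm
        obtain ⟨rfl, rfl⟩ := matches_inv kd env m₁
        exact Matches.seqn (matches_nil_of_nullable kd env hn)
          (ih t hk (fun c => hc (.seqnR c)) ts₂ w₂ m₂)
    | map f h ih =>
        intro t hk hc ts w hm
        rw [hdelta_map t f _ hc (.map f (by rw [hk]; exact h))] at hm
        obtain ⟨u, rfl, m⟩ := matches_inv kd env hm
        exact .map f (ih t hk (fun c => hc (.map f c)) ts u m)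
    | var x h ih =>
        intro t hk hc ts w hm
        rw [hdelta_var t x hc (.var x (by rw [hk]; exact h))] at hm
        exact .var x (ih t hk (fun c => hc (.var x c)) ts w hm)
  -- completeness of the derivative
  have L_bwd : ∀ {B : Type} {s : Syn Token Kind Var B} {ls : List Token} {w : B},
      Matches kd env s ls w → ¬ HasConflict env s →
        ∀ (t : Token) (ts' : List Token), ls = t :: ts' →
          Matches kd env (delta t s) ts' w := by
    intro B s ls w h
    induction h with
    | elem hkt =>
        rename_i k₀ t₀
        intro hc t ts' he
        injection he with h1 h2
        subst h1; subst h2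
        rw [hdelta_elem t₀ k₀ hc (by rw [hkt]; exact .elem k₀)]
        exact .eps t₀
    | eps v => intro _ t ts' he; simp at he
    | disjL m₁ ih =>
        intro hc t ts' he
        have hf1 := infirst_of_matches kd env m₁ t ts' he
        rw [hdelta_disj₁ t _ _ hc (.disjL hf1) hf1]
        exact ih (fun c => hc (.disjL c)) t ts' he
    | disjR m₂ ih =>
        intro hc t ts' he
        have hf2 := infirst_of_matches kd env m₂ t ts' he
        have hn1 : ¬ InFirst env (kd t) _ := fun hf1 => hc (HasConflict.disjFF hf1 hf2)
        rw [hdelta_disj₂ t _ _ hc (.disjR hf2) hn1]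
        exact ih (fun c => hc (.disjR c)) t ts' he
    | seqn m₁ m₂ ih₁ ih₂ =>
        rename_i A' B' s₁ s₂ ts₁ ts₂ v₁ v₂
        intro hc t ts' he
        cases ts₁ with
        | nil =>
            have he' : ts₂ = t :: ts' := he
            have hn₁ := nullable_of_matches_nil kd env m₁ rfl
            have hw : nullOpt s₁ = some v₁ := (hnull s₁ (fun c => hc (.seqnL c)) v₁).mpr hn₁
            have hf2 := infirst_of_matches kd env m₂ t ts' he'
            rw [hdelta_seqn₁ t s₁ s₂ v₁ hc (.seqnR hn₁ hf2) hw hf2]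
            exact Matches.seqn (.eps v₁) (ih₂ (fun c => hc (.seqnR c)) t ts' he')
        | cons a l =>
            injection he with h1 h2
            subst h1; subst h2
            have hf1 := infirst_of_matches kd env m₁ a l rfl
            have hcond : ∀ u, nullOpt s₁ = some u → ¬ InFirst env (kd a) s₂ := by
              intro u hu hf2
              have hn : Nullable env s₁ u := (hnull s₁ (fun c => hc (.seqnL c)) u).mp hu
              exact hc (.seqnSF
                (insnf_of_nullable_infirst env hn (fun c => hc (.seqnL c)) hf1) hf2)
            rw [hdelta_seqn₂ a s₁ s₂ hc
              (.seqnL hf1 (productive_of_matches kd env m₂)) hcond]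
            exact Matches.seqn (ih₁ (fun c => hc (.seqnL c)) a l rfl) m₂
    | map f m ih =>
        intro hc t ts' he
        rw [hdelta_map t f _ hc (.map f (infirst_of_matches kd env m t ts' he))]
        exact .map f (ih (fun c => hc (.map f c)) t ts' he)
    | var x m ih =>
        intro hc t ts' he
        rw [hdelta_var t x hc (.var x (infirst_of_matches kd env m t ts' he))]
        exact ih (fun c => hc (.var x c)) t ts' he
  -- main induction on the token list
  induction ts generalizing s with
  | nil =>
      rw [hparse_nil s, hnull s hs v]
      constructor
      · exact matches_nil_of_nullable kd env
      · exact fun h => nullable_of_matches_nil kd env h rfl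
  | cons t ts ih =>
      by_cases hf : InFirst env (kd t) s
      · rw [hparse_cons₁ s t ts hf]
        exact (ih (delta t s) (L_dg hf t rfl hs).1).trans
          ⟨L_fwd hf t rfl hs ts v, fun hm => L_bwd hm hs t ts rfl⟩
      · rw [hparse_cons₂ s t ts hf]
        constructor
        · intro h; simp at h
        · exact fun hm => absurd (infirst_of_matches kd env hm t ts rfl) hf

end
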